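/- Let n, k, m ∈ ℕ with m ≤ n + k. Let σ, σ′ : {0,…,n−1} → {0,…,m−1} and τ, τ′ : {0,…,k−1} → {0,…,m−1} be injective maps such that the images of σ and τ together cover all of {0,…,m−1}, and likewise the images of σ′ and τ′ together cover all of {0,…,m−1}. Then there exists a permutation u of {0,…,m−1} with σ′ = u ∘ σ and τ′ = u ∘ τ if and only if for all i ∈ {0,…,k−1} and j ∈ {0,…,n−1} one has τ(i) = σ(j) ⟺ τ′(i) = σ′(j). -/
import Mathlib


/-- Let `σ, σ′ : {0,…,n−1} → {0,…,m−1}` and `τ, τ′ : {0,…,k−1} → {0,…,m−1}` be injective,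
with the images of `σ` and `τ` jointly covering `{0,…,m−1}`, and likewise for `σ′, τ′`
(so in particular `m ≤ n + k`).  Then there is a permutation `u` of `{0,…,m−1}` with
`σ′ = u ∘ σ` and `τ′ = u ∘ τ` if and only if for all `i, j` one has
`τ(i) = σ(j) ⟺ τ′(i) = σ′(j)`. -/
theorem exists_perm_comp_iff_collision_pattern_eq
    (n k m : ℕ) (hm : m ≤ n + k)
    (σ σ' : Fin n → Fin m) (τ τ' : Fin k → Fin m)
    (hσ : Function.Injective σ) (hσ' : Function.Injective σ')
    (hτ : Function.Injective τ) (hτ' : Function.Injective τ')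
    (hcov : ∀ x : Fin m, (∃ j, σ j = x) ∨ (∃ i, τ i = x))
    (hcov' : ∀ x : Fin m, (∃ j, σ' j = x) ∨ (∃ i, τ' i = x)) :
    (∃ u : Equiv.Perm (Fin m), σ' = ⇑u ∘ σ ∧ τ' = ⇑u ∘ τ) ↔
      (∀ (i : Fin k) (j : Fin n), τ i = σ j ↔ τ' i = σ' j) := by
  constructor
  · rintro ⟨u, hu1, hu2⟩ i j
    rw [hu1, hu2]
    simp [u.injective.eq_iff]
  · intro hiff
    classical
    set f : Fin m → Fin m := fun x =>
      if h : ∃ j, σ j = x then σ' h.choose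
      else τ' ((hcov x).resolve_left h).choose with hf
    have hA : ∀ j, f (σ j) = σ' j := by
      intro j
      have h : ∃ j', σ j' = σ j := ⟨j, rfl⟩
      simp only [hf, dif_pos h]
      exact congrArg σ' (hσ h.choose_spec)
    have hB : ∀ i, f (τ i) = τ' i := by
      intro i
      by_cases h : ∃ j', σ j' = τ i
      · simp only [hf, dif_pos h]
        have : τ i = σ h.choose := h.choose_spec.symm
        exact ((hiff i h.choose).mp this).symm
      · simp only [hf, dif_neg h]
        exact congrArg τ' (hτ ((hcov (τ i)).resolve_left h).choose_spec)
    have hinj : Function.Injective f := by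
      intro x y hxy
      rcases hcov x with ⟨j1, rfl⟩ | ⟨i1, rfl⟩ <;> rcases hcov y with ⟨j2, rfl⟩ | ⟨i2, rfl⟩
      · rw [hA, hA] at hxy; exact congrArg σ (hσ' hxy)
      · rw [hA, hB] at hxy
        exact ((hiff i2 j1).mpr hxy.symm).symm
      · rw [hB, hA] at hxy
        exact (hiff i1 j2).mpr hxy
      · rw [hB, hB] at hxy; exact congrArg τ (hτ' hxy)
    refine ⟨Equiv.ofBijective f (Finite.injective_iff_bijective.mp hinj), ?_, ?_⟩
    · funext j; exact (hA j).symm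
    · funext i; exact (hB i).symm
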